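/- Let G be a finite abelian group equipped with a nondegenerate alternating bilinear pairing [·,·] : G × G → ℚ/ℤ. Then the order of G is a perfect square. -/

import Mathlib

instance : Fact ((0:ℚ) < 1) := ⟨one_pos⟩

lemma qz_torsion {t z : AddCircle (1:ℚ)} {n : ℕ} (hn : 0 < n)
    (ht : addOrderOf t = n) (hz : n • z = 0) : ∃ a : ℤ, a • t = z := by
  have hzf : IsOfFinAddOrder z := isOfFinAddOrder_iff_nsmul_eq_zero.2 ⟨n, hn, hz⟩
  set d := addOrderOf z with hd
  have hd0 : 0 < d := hzf.addOrderOf_pos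
  have hdn : d ∣ n := addOrderOf_dvd_of_nsmul_eq_zero hz
  obtain ⟨m, hmn, hm1, hmt⟩ := (AddCircle.addOrderOf_eq_pos_iff hn).1 ht
  obtain ⟨k, hkd, hk1, hkz⟩ := (AddCircle.addOrderOf_eq_pos_iff hd0).1 rfl
  obtain ⟨e, he⟩ := hdn
  have he0 : 0 < e := by nlinarith [hn, he]
  have : NeZero n := ⟨hn.ne'⟩
  set u := ZMod.unitOfCoprime m hm1 with hu
  set b : ZMod n := ((k * e : ℕ) : ZMod n) * ↑u⁻¹ with hb
  set a : ℤ := (b.val : ℤ) with ha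
  have hbm : (a : ZMod n) * (m : ZMod n) = ((k * e : ℕ) : ZMod n) := by
    have h1 : ((a : ZMod n)) = b := by
      rw [ha]; push_cast [ZMod.natCast_val, ZMod.cast_id]; rfl
    rw [h1, hb]
    have h2 : ((m : ZMod n)) = (u : ZMod n) := (ZMod.coe_unitOfCoprime m hm1).symm
    rw [h2, mul_assoc, Units.inv_mul, mul_one]
  have hdvd : (n : ℤ) ∣ (a * m - (k * e : ℕ)) := by
    rw [← ZMod.intCast_zmod_eq_zero_iff_dvd]
    push_cast
    push_cast at hbm
    rw [hbm]; ring
  obtain ⟨c, hc⟩ := hdvd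
  refine ⟨a, ?_⟩
  rw [← hmt, ← hkz, ← AddCircle.coe_zsmul]
  have key : (a • ((m:ℚ)/n*1) - ((k:ℚ)/d*1)) = c • (1:ℚ) := by
    have hcq : (a:ℚ) * m - (k*e : ℕ) = n * c := by exact_mod_cast congrArg (Int.cast : ℤ → ℚ) hc
    have hn0 : (n:ℚ) ≠ 0 := by positivity
    have hd0' : (d:ℚ) ≠ 0 := by positivity
    have heq : (n:ℚ) = d * e := by exact_mod_cast he
    push_cast at hcq
    simp only [zsmul_eq_mul, mul_one]
    field_simp
    nlinarith [hcq, heq]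
  have : ((a • ((m:ℚ)/n*1) - ((k:ℚ)/d*1) : ℚ) : AddCircle (1:ℚ)) = 0 := by
    rw [key, AddCircle.coe_eq_zero_iff]
    exact ⟨c, by norm_num⟩
  rwa [QuotientAddGroup.mk_sub, sub_eq_zero] at this

lemma aux_sq : ∀ (N : ℕ) (G : Type) [AddCommGroup G] [Fintype G]
    (f : G → G → AddCircle (1 : ℚ)),
    (∀ x y z, f (x + y) z = f x z + f y z) →
    (∀ x y z, f x (y + z) = f x y + f x z) →
    (∀ x, f x x = 0) →
    (∀ x, (∀ y, f x y = 0) → x = 0) →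
    Fintype.card G ≤ N → IsSquare (Fintype.card G) := by
  intro N
  induction N with
  | zero =>
    intro G _ _ f _ _ _ _ hle
    exact absurd hle (by simp [Fintype.card_pos.ne'])
  | succ N ih =>
    intro G _ _ f hl hr halt hnd hle
    by_cases hcard1 : Fintype.card G = 1
    · exact hcard1 ▸ ⟨1, rfl⟩
    have hnt : Nontrivial G :=
      Fintype.one_lt_card_iff_nontrivial.1 (Nat.lt_of_le_of_ne Fintype.card_pos (Ne.symm hcard1))
    -- bilinearity homs
    set L : G → G →+ AddCircle (1:ℚ) := fun x => AddMonoidHom.mk' (f x) (hr x) with hLdef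
    set R : G → G →+ AddCircle (1:ℚ) :=
      fun y => AddMonoidHom.mk' (fun x => f x y) (fun a b => hl a b y) with hRdef
    have hLapp : ∀ x y, L x y = f x y := fun _ _ => rfl
    have hRapp : ∀ x y, R y x = f x y := fun _ _ => rfl
    have hanti : ∀ x y, f y x = - f x y := by
      intro x y
      have h := halt (x + y)
      rw [hl, hr x x y, hr y x y, halt, halt, zero_add, add_zero] at h
      exact (neg_eq_of_add_eq_zero_right h).symm
    obtain ⟨x, hx⟩ := AddMonoid.exists_addOrderOf_eq_exponent
      (AddMonoid.ExponentExists.of_finite (G := G))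
    set n := addOrderOf x with hndef
    have hn1 : 1 < n := by rw [hx]; exact AddMonoid.one_lt_exponent
    have hn0 : 0 < n := by omega
    have hxn : n • x = 0 := addOrderOf_nsmul_eq_zero x
    -- the image subgroup of f x ⬝
    have hfin : Finite ↥(L x).range := Set.Finite.to_subtype (Set.finite_range (L x))
    have hexpIm : AddMonoid.exponent ↥(L x).range = n := by
      apply Nat.dvd_antisymm
      · rw [AddMonoid.exponent_dvd_iff_forall_nsmul_eq_zero]
        rintro ⟨_, g, rfl⟩
        apply Subtype.ext
        show n • (L x g) = 0
        rw [hLapp, ← hRapp, ← map_nsmul (R g) n x, hxn, map_zero]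
      · have hkill : ∀ g : G, (AddMonoid.exponent ↥(L x).range) • f x g = 0 := by
          intro g
          have h := AddMonoid.exponent_nsmul_eq_zero
            (⟨L x g, AddMonoidHom.mem_range.2 ⟨g, rfl⟩⟩ : ↥(L x).range)
          exact congrArg (Subtype.val) h
        have hx0 : (AddMonoid.exponent ↥(L x).range) • x = 0 := by
          apply hnd
          intro g
          rw [← hRapp, map_nsmul (R g) _ x, hRapp]
          exact hkill g
        exact addOrderOf_dvd_of_nsmul_eq_zero hx0
    obtain ⟨z, hz⟩ := AddMonoid.exists_addOrderOf_eq_exponent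
      (AddMonoid.ExponentExists.of_finite (G := ↥(L x).range))
    obtain ⟨y, hy⟩ := AddMonoidHom.mem_range.1 z.2
    have ht : addOrderOf (f x y) = n := by
      rw [← hLapp, hy]
      rw [← addOrderOf_injective ((L x).range.subtype) (AddSubgroup.subtype_injective _) z] at hz
      exact hz.trans hexpIm
    set t := f x y with htdef
    have htn : ∀ b : ℤ, b • t = 0 ↔ (n:ℤ) ∣ b := by
      intro b
      rw [← addOrderOf_dvd_iff_zsmul_eq_zero, ht]
    have hyn : addOrderOf y = n := by
      apply Nat.dvd_antisymm (hx ▸ AddMonoid.addOrder_dvd_exponent y)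
      rw [← ht]
      apply addOrderOf_dvd_of_nsmul_eq_zero
      rw [htdef, ← hLapp, ← map_nsmul (L x) _ y, addOrderOf_nsmul_eq_zero, map_zero]
    have hysm : n • y = 0 := hyn ▸ addOrderOf_nsmul_eq_zero y
    -- the complement
    set K : AddSubgroup G := (L x).ker ⊓ (L y).ker with hKdef
    have hKmem : ∀ g, g ∈ K ↔ f x g = 0 ∧ f y g = 0 := by
      intro g
      simp [hKdef, AddSubgroup.mem_inf, AddMonoidHom.mem_ker, hLapp]
    -- decomposition
    have hdecomp : ∀ g : G, ∃ (a c : ℤ) (k : G), k ∈ K ∧ g = a • x + c • y + k := by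
      intro g
      have h1 : n • f x g = 0 := by
        rw [← hRapp, ← map_nsmul (R g) n x, hxn, map_zero]
      have h2 : n • f y g = 0 := by
        rw [← hRapp, ← map_nsmul (R g) n y, hysm, map_zero]
      obtain ⟨a, hafx⟩ := qz_torsion hn0 ht h1
      obtain ⟨c, hcfy⟩ := qz_torsion hn0 ht h2
      refine ⟨-c, a, g - ((-c) • x + a • y), ?_, by abel⟩
      rw [hKmem]
      constructor
      · rw [← hLapp, map_sub, map_add, map_zsmul, map_zsmul, hLapp, hLapp, hLapp, halt,
          smul_zero, zero_add, ← htdef, hafx, sub_self]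
      · rw [← hLapp, map_sub, map_add, map_zsmul, map_zsmul, hLapp, hLapp, hLapp, halt,
          hanti x y, ← htdef, smul_zero, add_zero, smul_neg, neg_smul, neg_neg, hcfy, sub_self]
    -- triviality of combinations
    have claim0 : ∀ (a c : ℤ) (k : G), k ∈ K → a • x + c • y + k = 0 →
        a • x = 0 ∧ c • y = 0 ∧ k = 0 := by
      intro a c k hk h0
      obtain ⟨hk1, hk2⟩ := (hKmem k).1 hk
      have hfx : f x (a • x + c • y + k) = 0 := by rw [h0, ← hLapp x 0, map_zero]
      rw [← hLapp, map_add, map_add, map_zsmul, map_zsmul, hLapp, hLapp, hLapp, halt,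
        smul_zero, zero_add, ← htdef, hk1, add_zero] at hfx
      have hfy : f y (a • x + c • y + k) = 0 := by rw [h0, ← hLapp y 0, map_zero]
      rw [← hLapp, map_add, map_add, map_zsmul, map_zsmul, hLapp, hLapp, hLapp, halt,
        hanti x y, ← htdef, smul_zero, add_zero, hk2, add_zero, smul_neg, neg_eq_zero] at hfy
      have hc : (n:ℤ) ∣ c := (htn c).1 hfx
      have ha : (n:ℤ) ∣ a := (htn a).1 hfy
      have hcy : c • y = 0 := by
        obtain ⟨b, rfl⟩ := hc
        rw [mul_comm, mul_smul, natCast_zsmul, hysm, smul_zero]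
      have hax : a • x = 0 := by
        obtain ⟨b, rfl⟩ := ha
        rw [mul_comm, mul_smul, natCast_zsmul, hxn, smul_zero]
      refine ⟨hax, hcy, ?_⟩
      rw [hax, hcy, zero_add, zero_add] at h0
      exact h0
    -- the bijection
    set φ : ↥(AddSubgroup.zmultiples x) × ↥(AddSubgroup.zmultiples y) × ↥K → G :=
      fun p => (p.1 : G) + (p.2.1 : G) + (p.2.2 : G) with hφdef
    have hinj : Function.Injective φ := by
      rintro ⟨⟨u, hu⟩, ⟨v, hv⟩, ⟨k, hk⟩⟩ ⟨⟨u', hu'⟩, ⟨v', hv'⟩, ⟨k', hk'⟩⟩ h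
      obtain ⟨a, rfl⟩ := AddSubgroup.mem_zmultiples_iff.1 hu
      obtain ⟨a', rfl⟩ := AddSubgroup.mem_zmultiples_iff.1 hu'
      obtain ⟨c, rfl⟩ := AddSubgroup.mem_zmultiples_iff.1 hv
      obtain ⟨c', rfl⟩ := AddSubgroup.mem_zmultiples_iff.1 hv'
      have h' : a • x + c • y + k = a' • x + c' • y + k' := h
      have h0 : (a - a') • x + (c - c') • y + (k - k') = 0 := by
        have hsub : (a • x + c • y + k) - (a' • x + c' • y + k') = 0 := by
          rw [h', sub_self]
        rw [← hsub, sub_smul, sub_smul]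
        abel
      obtain ⟨h1, h2, h3⟩ := claim0 _ _ _ (K.sub_mem hk hk') h0
      rw [sub_smul, sub_eq_zero] at h1 h2
      rw [sub_eq_zero] at h3
      simp only [Prod.mk.injEq, Subtype.mk.injEq]
      exact ⟨h1, h2, h3⟩
    have hsurj : Function.Surjective φ := by
      intro g
      obtain ⟨a, c, k, hk, rfl⟩ := hdecomp g
      exact ⟨⟨⟨a • x, AddSubgroup.mem_zmultiples_iff.2 ⟨a, rfl⟩⟩,
        ⟨c • y, AddSubgroup.mem_zmultiples_iff.2 ⟨c, rfl⟩⟩, ⟨k, hk⟩⟩, rfl⟩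
    have hcardG : Nat.card G = n * (n * Nat.card ↥K) := by
      rw [← Nat.card_eq_of_bijective φ ⟨hinj, hsurj⟩, Nat.card_prod, Nat.card_prod,
        Nat.card_zmultiples, Nat.card_zmultiples, hyn]
    -- nondegeneracy on K
    have _inst : Fintype ↥K := Fintype.ofFinite _
    have hndK : ∀ p : ↥K, (∀ q : ↥K, f (p:G) (q:G) = 0) → p = 0 := by
      rintro ⟨k, hk⟩ h0
      obtain ⟨hk1, hk2⟩ := (hKmem k).1 hk
      apply Subtype.ext
      show k = 0
      apply hnd
      intro g
      obtain ⟨a, c, k', hk', rfl⟩ := hdecomp g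
      rw [← hLapp, map_add, map_add, map_zsmul, map_zsmul, hLapp, hLapp, hLapp,
        hanti x k, hk1, hanti y k, hk2, h0 ⟨k', hk'⟩]
      simp
    -- apply the induction hypothesis
    have hKcard : Fintype.card ↥K ≤ N := by
      have hpos : 0 < Nat.card ↥K := Nat.card_pos
      have hlt : Nat.card ↥K < Nat.card G := by
        rw [hcardG]
        have h4 : 2 * (2 * Nat.card ↥K) ≤ n * (n * Nat.card ↥K) :=
          Nat.mul_le_mul (by omega) (Nat.mul_le_mul (by omega) le_rfl)
        omega
      have h1 : Nat.card G = Fintype.card G := Nat.card_eq_fintype_card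
      have h2 : Nat.card ↥K = Fintype.card ↥K := Nat.card_eq_fintype_card
      omega
    obtain ⟨m, hm⟩ := ih ↥K (fun p q => f (p:G) (q:G))
      (fun p q r => hl p q r) (fun p q r => hr p q r) (fun p => halt p) hndK hKcard
    refine ⟨n * m, ?_⟩
    have h2 : Nat.card ↥K = Fintype.card ↥K := Nat.card_eq_fintype_card
    rw [← Nat.card_eq_fintype_card, hcardG, h2, hm]
    ring


/-- a finite abelian group admitting a nondegenerate alternating
pairing with values in `ℚ/ℤ` has square order. -/
theorem card_sq_of_nondeg_alternating_pairing (G : Type) [AddCommGroup G] [Fintype G]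
    (f : G → G → AddCircle (1 : ℚ))
    (hadd_left : ∀ x y z, f (x + y) z = f x z + f y z)
    (hadd_right : ∀ x y z, f x (y + z) = f x y + f x z)
    (halt : ∀ x, f x x = 0)
    (hnondeg : ∀ x, (∀ y, f x y = 0) → x = 0) :
    IsSquare (Fintype.card G) := by
  exact aux_sq (Fintype.card G) G f hadd_left hadd_right halt hnondeg le_rfl
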